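/- Let H be a real Hilbert space, let f, g ∈ Γ0(H), and let x₀ ∈ dom f ∩ dom g. If ‖prox_f(x) − x₀‖ = ‖prox_g(x) − x₀‖ for all x ∈ H, then f(x) − f(x₀) = g(x) − g(x₀) for all x ∈ H. -/

import Mathlib

set_option linter.unusedSectionVars false
set_option maxHeartbeats 2000000

open scoped InnerProductSpace
noncomputable section

variable {H : Type*} [NormedAddCommGroup H] [InnerProductSpace ℝ H] [CompleteSpace H]

/-- Convexity for extended-real-valued functions on a real Hilbert space. -/
def ERealConvexOn (f : H → EReal) : Prop :=
  ∀ x y : H, ∀ a b : ℝ, 0 ≤ a → 0 ≤ b → a + b = 1 →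
    f (a • x + b • y) ≤ (a : EReal) * f x + (b : EReal) * f y

/-- `f ∈ Γ₀(H)`: proper (never `⊥`, not identically `⊤`), convex and lower semicontinuous. -/
def Gamma0 (f : H → EReal) : Prop :=
  (∃ x, f x ≠ ⊤) ∧ (∀ x, f x ≠ ⊥) ∧ ERealConvexOn f ∧ LowerSemicontinuous f

/-- `p` is the proximal point of `f` at `x`, i.e. `p` minimizes `y ↦ f y + (1/2)‖x - y‖²`. -/
def IsProx (f : H → EReal) (x p : H) : Prop :=
  ∀ y : H, f p + (((1:ℝ)/2 * ‖x - p‖ ^ 2 : ℝ) : EReal)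
    ≤ f y + (((1:ℝ)/2 * ‖x - y‖ ^ 2 : ℝ) : EReal)

/-- prox with general parameter α -/
def IsProxA (α : ℝ) (f : H → EReal) (x p : H) : Prop :=
  ∀ y : H, f p + ((α/2 * ‖x - p‖ ^ 2 : ℝ) : EReal)
    ≤ f y + ((α/2 * ‖x - y‖ ^ 2 : ℝ) : EReal)

lemma isProx_iff_A {f : H → EReal} {x p : H} : IsProx f x p ↔ IsProxA 1 f x p := Iff.rfl

lemma isProxA_ne_top {f : H → EReal} {α : ℝ} {x p : H}
    (hprop : ∃ y, f y ≠ ⊤) (hp : IsProxA α f x p) : f p ≠ ⊤ := by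
  obtain ⟨y₀, hy₀⟩ := hprop
  intro htop
  have h := hp y₀
  rw [htop, EReal.top_add_coe] at h
  exact absurd (top_le_iff.1 h) (EReal.add_lt_top hy₀ (EReal.coe_ne_top _)).ne

lemma isProxA_finite {f : H → EReal} {α : ℝ} {x p : H}
    (hprop : ∃ y, f y ≠ ⊤) (hbot : ∀ y, f y ≠ ⊥) (hp : IsProxA α f x p) :
    f p = ((f p).toReal : EReal) :=
  (EReal.coe_toReal (isProxA_ne_top hprop hp) (hbot p)).symm

/-- real-valued comparison from IsProxA when both values are real -/
lemma isProxA_real {f : H → EReal} {α : ℝ} {x p y : H} {r s : ℝ}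
    (hp : IsProxA α f x p) (hpr : f p = (r : EReal)) (hys : f y = (s : EReal)) :
    r + α/2 * ‖x - p‖ ^ 2 ≤ s + α/2 * ‖x - y‖ ^ 2 := by
  have h := hp y
  rw [hpr, hys] at h
  exact_mod_cast h

/-- Variational inequality: `α ⟪x - p, y - p⟫ ≤ f y - f p`. -/
lemma prox_vi {f : H → EReal} (hconv : ERealConvexOn f) {α : ℝ} (hα : 0 < α)
    {x p : H} (hp : IsProxA α f x p) {r : ℝ} (hpr : f p = (r : EReal)) (y : H) :
    ((r + α * ⟪x - p, y - p⟫_ℝ : ℝ) : EReal) ≤ f y := by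
  by_cases hy : f y = ⊤
  · rw [hy]; exact le_top
  have hybot : f y ≠ ⊥ := by
    intro hb
    have h := hp y
    rw [hpr, hb, EReal.bot_add] at h
    rw [← EReal.coe_add] at h
    exact absurd (le_bot_iff.1 h) (EReal.coe_ne_bot _)
  set s : ℝ := (f y).toReal with hs
  have hys : f y = (s : EReal) := (EReal.coe_toReal hy hybot).symm
  rw [hys]
  rw [EReal.coe_le_coe_iff]
  -- real goal: r + α * ⟪x-p, y-p⟫ ≤ s
  apply le_of_forall_pos_le_add
  intro ε hε
  set t : ℝ := min 1 (2*ε/(α*(‖y - p‖^2+1))) with ht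
  have hden : 0 < α*(‖y - p‖^2+1) := by positivity
  have ht0 : 0 < t := lt_min one_pos (by positivity)
  have ht1 : t ≤ 1 := min_le_left _ _
  -- convexity at y, p with weights t, 1-t
  have hcv := hconv y p t (1-t) ht0.le (by linarith) (by ring)
  rw [hpr, hys] at hcv
  have hcoe : (t : EReal) * (s:EReal) + ((1-t : ℝ) : EReal) * (r:EReal)
      = ((t*s + (1-t)*r : ℝ) : EReal) := by
    rw [← EReal.coe_mul, ← EReal.coe_mul, ← EReal.coe_add]
  rw [hcoe] at hcv
  set yt := t • y + (1-t) • p with hyt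
  have hytne : f yt ≠ ⊤ := fun hb => by rw [hb] at hcv; exact absurd (top_le_iff.1 hcv) (EReal.coe_ne_top _)
  have hytnb : f yt ≠ ⊥ := by
    intro hb
    have h := hp yt
    rw [hpr, hb, EReal.bot_add] at h
    rw [← EReal.coe_add] at h
    exact absurd (le_bot_iff.1 h) (EReal.coe_ne_bot _)
  set w : ℝ := (f yt).toReal with hw
  have hwco : f yt = (w : EReal) := (EReal.coe_toReal hytne hytnb).symm
  have hcvr : w ≤ t*s + (1-t)*r := by rw [hwco] at hcv; exact_mod_cast hcv
  have hmain := isProxA_real hp hpr hwco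
  -- expand ‖x - yt‖²
  have hxyt : x - yt = (x - p) - t • (y - p) := by
    rw [hyt]; module
  have hexp : ‖x - yt‖^2 = ‖x-p‖^2 - 2*t*⟪x-p, y-p⟫_ℝ + t^2*‖y-p‖^2 := by
    rw [hxyt, norm_sub_sq_real, real_inner_smul_right, norm_smul]
    simp [Real.norm_eq_abs, mul_pow, sq_abs]
    ring
  rw [hexp] at hmain
  -- now: r + α/2 ‖x-p‖² ≤ w + α/2 (...) ≤ ts + (1-t)r + α/2(...)
  have h2 : r + α/2 * ‖x-p‖^2 ≤ t*s + (1-t)*r + α/2 * (‖x-p‖^2 - 2*t*⟪x-p, y-p⟫_ℝ + t^2*‖y-p‖^2) :=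
    le_trans hmain (by linarith)
  have h3 : t*(r + α * ⟪x-p, y-p⟫_ℝ) ≤ t*(s + α*t/2 * ‖y-p‖^2) := by nlinarith
  have h4 : r + α * ⟪x-p, y-p⟫_ℝ ≤ s + α*t/2 * ‖y-p‖^2 :=
    le_of_mul_le_mul_left h3 ht0
  have ht2 : t ≤ 2*ε/(α*(‖y - p‖^2+1)) := min_le_right _ _
  have h5 : α*t/2 * ‖y-p‖^2 ≤ ε := by
    have h6 : t*(α*(‖y - p‖^2+1)) ≤ 2*ε := (le_div_iff₀ hden).1 ht2
    nlinarith [sq_nonneg ‖y-p‖, ht0]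
  linarith

/-- converse: a subgradient inequality implies being a prox point -/
lemma isProx_of_subgrad {f : H → EReal} {p : H} {r : ℝ} (hpr : f p = (r : EReal))
    (s : H) (hs : ∀ w, ((r + ⟪s, w - p⟫_ℝ : ℝ) : EReal) ≤ f w) :
    IsProx f (p + s) p := by
  intro y
  by_cases hy : f y = ⊤
  · rw [hy, EReal.top_add_coe]; exact le_top
  have hybot : f y ≠ ⊥ := by
    intro hb
    have := hs y
    rw [hb] at this
    exact absurd (le_bot_iff.1 this) (EReal.coe_ne_bot _)
  set sy : ℝ := (f y).toReal with hsy
  have hys : f y = (sy : EReal) := (EReal.coe_toReal hy hybot).symm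
  rw [hpr, hys, ← EReal.coe_add, ← EReal.coe_add, EReal.coe_le_coe_iff]
  have h1 : r + ⟪s, y - p⟫_ℝ ≤ sy := by
    have := hs y; rw [hys] at this; exact_mod_cast this
  have e1 : p + s - p = s := by abel
  have e2 : p + s - y = s - (y - p) := by abel
  rw [e1, e2, norm_sub_sq_real]
  nlinarith [sq_nonneg ‖y - p‖, sq_nonneg ‖s‖]

lemma prox_unique {f : H → EReal} (hprop : ∃ y, f y ≠ ⊤) (hbot : ∀ y, f y ≠ ⊥)
    (hconv : ERealConvexOn f) {α : ℝ} (hα : 0 < α) {x p q : H}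
    (hp : IsProxA α f x p) (hq : IsProxA α f x q) : p = q := by
  set r : ℝ := (f p).toReal
  set w : ℝ := (f q).toReal
  have hpr : f p = (r : EReal) := isProxA_finite hprop hbot hp
  have hqr : f q = (w : EReal) := isProxA_finite hprop hbot hq
  have h1 := prox_vi hconv hα hp hpr q
  have h2 := prox_vi hconv hα hq hqr p
  rw [hqr] at h1; rw [hpr] at h2
  have h1' : r + α * ⟪x - p, q - p⟫_ℝ ≤ w := by exact_mod_cast h1
  have h2' : w + α * ⟪x - q, p - q⟫_ℝ ≤ r := by exact_mod_cast h2
  have key : α * ‖p - q‖^2 ≤ 0 := by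
    have e : ⟪x - p, q - p⟫_ℝ + ⟪x - q, p - q⟫_ℝ = ‖p - q‖^2 := by
      rw [← real_inner_self_eq_norm_sq]
      simp only [inner_sub_left, inner_sub_right]
      ring
    nlinarith
  have hq0 : ‖p - q‖^2 ≤ 0 := nonpos_of_mul_nonpos_right (by linarith) hα
  have : ‖p - q‖ = 0 := by nlinarith [norm_nonneg (p - q)]
  have : p - q = 0 := norm_eq_zero.1 this
  exact sub_eq_zero.1 this

lemma prox_nonexpansive {f : H → EReal} (hprop : ∃ y, f y ≠ ⊤) (hbot : ∀ y, f y ≠ ⊥)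
    (hconv : ERealConvexOn f) {x z p q : H}
    (hp : IsProxA 1 f x p) (hq : IsProxA 1 f z q) : ‖p - q‖ ≤ ‖x - z‖ := by
  set r : ℝ := (f p).toReal
  set w : ℝ := (f q).toReal
  have hpr : f p = (r : EReal) := isProxA_finite hprop hbot hp
  have hqr : f q = (w : EReal) := isProxA_finite hprop hbot hq
  have h1 := prox_vi hconv one_pos hp hpr q
  have h2 := prox_vi hconv one_pos hq hqr p
  rw [hqr] at h1; rw [hpr] at h2
  have h1' : r + 1 * ⟪x - p, q - p⟫_ℝ ≤ w := by exact_mod_cast h1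
  have h2' : w + 1 * ⟪z - q, p - q⟫_ℝ ≤ r := by exact_mod_cast h2
  have key : ‖p - q‖^2 ≤ ⟪x - z, p - q⟫_ℝ := by
    have e : ⟪x - p, q - p⟫_ℝ + ⟪z - q, p - q⟫_ℝ = ⟪z - x, p - q⟫_ℝ + ‖p - q‖^2 := by
      rw [← real_inner_self_eq_norm_sq]
      simp only [inner_sub_left, inner_sub_right]
      ring
    have e2 : ⟪z - x, p - q⟫_ℝ = - ⟪x - z, p - q⟫_ℝ := by
      rw [← inner_neg_left]; congr 1; abel
    rw [e2] at e
    linarith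
  have hcs : ⟪x - z, p - q⟫_ℝ ≤ ‖x - z‖ * ‖p - q‖ := real_inner_le_norm _ _
  rcases eq_or_lt_of_le (norm_nonneg (p - q)) with h0 | h0
  · rw [← h0]; exact norm_nonneg _
  · nlinarith

lemma prox_exists {f : H → EReal} (hprop : ∃ y, f y ≠ ⊤) (hbot : ∀ y, f y ≠ ⊥)
    (hconv : ERealConvexOn f) (hlsc : LowerSemicontinuous f)
    {B : ℝ} {xb : H} (hB : ∀ w, ((B - ‖xb - w‖^2 : ℝ) : EReal) ≤ f w)
    (y : H) {α : ℝ} (hα : 4 ≤ α) : ∃ q, IsProxA α f y q := by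
  classical
  set val : H → ℝ := fun w => (f w).toReal + α/2 * ‖y - w‖^2 with hval
  set S : Set ℝ := val '' {w | f w ≠ ⊤} with hS
  have hSne : S.Nonempty := by
    obtain ⟨w₀, hw₀⟩ := hprop
    exact ⟨val w₀, ⟨w₀, hw₀, rfl⟩⟩
  have hco : ∀ w, f w ≠ ⊤ → f w = (((f w).toReal : ℝ) : EReal) :=
    fun w hw => (EReal.coe_toReal hw (hbot w)).symm
  have hlow : ∀ w, f w ≠ ⊤ → B - 2*‖xb - y‖^2 ≤ val w := by
    intro w hw
    have h1 : B - ‖xb - w‖^2 ≤ (f w).toReal := by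
      have := hB w; rw [hco w hw] at this; exact_mod_cast this
    have h2 : ‖xb - w‖ ≤ ‖xb - y‖ + ‖y - w‖ := by
      have : xb - w = (xb - y) + (y - w) := by abel
      rw [this]; exact norm_add_le _ _
    have h3 : ‖xb - w‖^2 ≤ 2*‖xb - y‖^2 + 2*‖y - w‖^2 := by
      nlinarith [norm_nonneg (xb - w), norm_nonneg (xb - y), norm_nonneg (y - w),
        sq_nonneg (‖xb - y‖ - ‖y - w‖), mul_self_le_mul_self (norm_nonneg (xb - w)) h2]
    have h4 : 0 ≤ ‖y - w‖^2 := sq_nonneg _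
    simp only [hval]
    nlinarith
  have hbdd : BddBelow S := ⟨B - 2*‖xb - y‖^2, by rintro c ⟨w, hw, rfl⟩; exact hlow w hw⟩
  set m : ℝ := sInf S with hm
  have hmle : ∀ w, f w ≠ ⊤ → m ≤ val w := fun w hw => csInf_le hbdd ⟨w, hw, rfl⟩
  have hseq : ∀ n : ℕ, ∃ w, f w ≠ ⊤ ∧ val w < m + 1/(n+1) := by
    intro n
    have hlt : m < m + 1/(n+1) := by
      have : (0:ℝ) < 1/(n+1) := by positivity
      linarith
    obtain ⟨c, ⟨w, hw, rfl⟩, hc⟩ := exists_lt_of_csInf_lt hSne hlt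
    exact ⟨w, hw, hc⟩
  choose w hwD hwv using hseq
  -- Cauchy estimate
  have hcest : ∀ n k : ℕ, ‖w n - w k‖^2 ≤ 1/(n+1) + 1/(k+1) := by
    intro n k
    set mid := (1/2:ℝ) • w n + (1/2:ℝ) • w k with hmid
    have hcv := hconv (w n) (w k) (1/2) (1/2) (by norm_num) (by norm_num) (by norm_num)
    rw [hco _ (hwD n), hco _ (hwD k)] at hcv
    have hcoe2 : ((1/2:ℝ) : EReal) * (((f (w n)).toReal : ℝ) : EReal)
        + ((1/2:ℝ) : EReal) * (((f (w k)).toReal : ℝ) : EReal)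
        = ((1/2 * (f (w n)).toReal + 1/2 * (f (w k)).toReal : ℝ) : EReal) := by
      rw [← EReal.coe_mul, ← EReal.coe_mul, ← EReal.coe_add]
    rw [hcoe2] at hcv
    have hmidt : f mid ≠ ⊤ := fun hb => by
      rw [hb] at hcv; exact absurd (top_le_iff.1 hcv) (EReal.coe_ne_top _)
    have hcvr : (f mid).toReal ≤ 1/2 * (f (w n)).toReal + 1/2 * (f (w k)).toReal := by
      rw [hco _ hmidt] at hcv; exact_mod_cast hcv
    have hmm : m ≤ val mid := hmle mid hmidt
    -- parallelogram
    set a := y - w n with ha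
    set b := y - w k with hb2
    have hymid : y - mid = (1/2:ℝ) • (a + b) := by
      simp only [hmid, ha, hb2]; module
    have hab : ‖w n - w k‖ = ‖a - b‖ := by
      have : a - b = -(w n - w k) := by simp only [ha, hb2]; abel
      rw [this, norm_neg]
    have hpar := parallelogram_law_with_norm ℝ a b
    have hymid2 : ‖y - mid‖^2 = (1/4) * ‖a+b‖^2 := by
      rw [hymid, norm_smul, Real.norm_eq_abs, abs_of_nonneg (by norm_num : (0:ℝ) ≤ 1/2), mul_pow]
      ring
    have hvn : val (w n) = (f (w n)).toReal + α/2 * ‖a‖^2 := rfl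
    have hvk : val (w k) = (f (w k)).toReal + α/2 * ‖b‖^2 := rfl
    have hvm : val mid = (f mid).toReal + α/2 * ((1/4) * ‖a+b‖^2) := by
      simp only [hval]; rw [hymid2]
    have hd2 : α/8 * ‖a-b‖^2 ≤ 1/2 * (1/(n+1)) + 1/2 * (1/(k+1)) := by
      have h5 := hwv n
      have h6 := hwv k
      rw [hvn] at h5; rw [hvk] at h6
      have hsq : ‖a+b‖*‖a+b‖ = 2*(‖a‖*‖a‖+‖b‖*‖b‖) - ‖a-b‖*‖a-b‖ := by linarith [hpar]
      have hsq' : ‖a+b‖^2 = 2*‖a‖^2 + 2*‖b‖^2 - ‖a-b‖^2 := by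
        simp only [pow_two]; linarith [hsq]
      rw [hvm, hsq'] at hmm
      nlinarith
    rw [hab]
    nlinarith [sq_nonneg ‖a - b‖]
  -- Cauchy sequence
  have hcauchy : CauchySeq w := by
    rw [Metric.cauchySeq_iff']
    intro ε hε
    obtain ⟨N, hN⟩ := exists_nat_gt (2/ε^2)
    refine ⟨N, fun n hn => ?_⟩
    have h1 := hcest n N
    have h2 : 1/((n:ℝ)+1) + 1/((N:ℝ)+1) ≤ 2/((N:ℝ)+1) := by
      have : 1/((n:ℝ)+1) ≤ 1/((N:ℝ)+1) := by
        apply one_div_le_one_div_of_le (by positivity)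
        exact_mod_cast Nat.succ_le_succ hn
      have e22 : 2/((N:ℝ)+1) = 1/((N:ℝ)+1) + 1/((N:ℝ)+1) := by ring
      linarith
    have h3 : 2/((N:ℝ)+1) < ε^2 := by
      rw [div_lt_iff₀ (by positivity)]
      have h4 : 2/ε^2 < (N:ℝ) := hN
      have h5 : (2:ℝ) < N * ε^2 := by
        rw [div_lt_iff₀ (by positivity)] at h4; linarith
      nlinarith [sq_nonneg ε]
    rw [dist_eq_norm]
    nlinarith [norm_nonneg (w n - w N)]
  obtain ⟨q, hq⟩ := cauchySeq_tendsto_of_complete hcauchy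
  -- f q + quadratic ≤ m
  have hnormt : Filter.Tendsto (fun n => ‖y - w n‖^2) Filter.atTop (nhds (‖y - q‖^2)) := by
    apply Filter.Tendsto.pow
    exact (Filter.Tendsto.sub tendsto_const_nhds hq).norm
  have hfq : f q ≤ ((m - α/2*‖y - q‖^2 : ℝ) : EReal) := by
    by_contra hlt
    push_neg at hlt
    obtain ⟨c, hc1, hc2⟩ := EReal.exists_between_coe_real hlt
    have hev1 : ∀ᶠ n in Filter.atTop, (c : EReal) < f (w n) :=
      hq.eventually (hlsc q c hc2)
    have hT : Filter.Tendsto (fun n : ℕ => m + 1/((n:ℝ)+1) - α/2*‖y - w n‖^2)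
        Filter.atTop (nhds (m + 0 - α/2*‖y - q‖^2)) := by
      apply Filter.Tendsto.sub
      · exact Filter.Tendsto.add tendsto_const_nhds tendsto_one_div_add_atTop_nhds_zero_nat
      · exact Filter.Tendsto.const_mul _ hnormt
    have hmc : m + 0 - α/2*‖y - q‖^2 < c := by
      rw [EReal.coe_lt_coe_iff] at hc1; linarith
    have hev2 : ∀ᶠ n : ℕ in Filter.atTop, m + 1/((n:ℝ)+1) - α/2*‖y - w n‖^2 < c :=
      hT.eventually_lt_const hmc
    obtain ⟨n, h1, h2⟩ := (hev1.and hev2).exists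
    rw [hco _ (hwD n), EReal.coe_lt_coe_iff] at h1
    have h3 := hwv n
    simp only [hval] at h3
    linarith
  refine ⟨q, fun z => ?_⟩
  have hlhs : f q + ((α/2 * ‖y - q‖^2 : ℝ) : EReal) ≤ (m : EReal) := by
    calc f q + ((α/2 * ‖y - q‖^2 : ℝ) : EReal)
        ≤ ((m - α/2*‖y - q‖^2 : ℝ) : EReal) + ((α/2 * ‖y - q‖^2 : ℝ) : EReal) :=
          add_le_add_left hfq _
      _ = (m : EReal) := by rw [← EReal.coe_add]; norm_num
  refine le_trans hlhs ?_
  by_cases hz : f z = ⊤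
  · rw [hz, EReal.top_add_coe]; exact le_top
  · have := hmle z hz
    rw [hco _ hz, ← EReal.coe_add]
    exact_mod_cast (by simpa [hval] using this : m ≤ (f z).toReal + α/2 * ‖y - z‖^2)

/-- The key algebraic identity. -/
lemma half_norm_identity (x z x₀ p : H) :
    1/2*‖z - x₀‖^2 - 1/2*‖x - x₀‖^2 + 1/2*‖x - p‖^2 - 1/2*‖z - p‖^2
      = ⟪p - x₀, z - x⟫_ℝ := by
  simp only [norm_sub_sq_real, inner_sub_left, inner_sub_right]
  have c1 : ⟪p, z⟫_ℝ = ⟪z, p⟫_ℝ := real_inner_comm _ _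
  have c2 : ⟪p, x⟫_ℝ = ⟪x, p⟫_ℝ := real_inner_comm _ _
  have c3 : ⟪x₀, z⟫_ℝ = ⟪z, x₀⟫_ℝ := real_inner_comm _ _
  have c4 : ⟪x₀, x⟫_ℝ = ⟪x, x₀⟫_ℝ := real_inner_comm _ _
  linarith

/-- subgradient property of the potential Φ -/
lemma phi_subgrad {f : H → EReal} (hprop : ∃ y, f y ≠ ⊤) (hbot : ∀ y, f y ≠ ⊥)
    {P : H → H} (hprox : ∀ x, IsProx f x (P x)) (x₀ : H) (x z : H) :
    (1/2*‖x - x₀‖^2 - (f (P x)).toReal - 1/2*‖x - P x‖^2) + ⟪P x - x₀, z - x⟫_ℝ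
      ≤ 1/2*‖z - x₀‖^2 - (f (P z)).toReal - 1/2*‖z - P z‖^2 := by
  have hfx : f (P x) = (((f (P x)).toReal : ℝ) : EReal) :=
    isProxA_finite hprop hbot (isProx_iff_A.1 (hprox x))
  have hfz : f (P z) = (((f (P z)).toReal : ℝ) : EReal) :=
    isProxA_finite hprop hbot (isProx_iff_A.1 (hprox z))
  have key : (f (P z)).toReal + (1:ℝ)/2*‖z - P z‖^2
      ≤ (f (P x)).toReal + (1:ℝ)/2*‖z - P x‖^2 := by
    have h := (hprox z) (P x)
    rw [hfx, hfz] at h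
    exact_mod_cast h
  have hid := half_norm_identity x z x₀ (P x)
  linarith

/-- lower bound for the potential -/
lemma phi_bdd {f : H → EReal} (hbot : ∀ y, f y ≠ ⊥)
    {P : H → H} (hprox : ∀ x, IsProx f x (P x)) (x₀ : H) (hx₀ : f x₀ ≠ ⊤)
    (hprop : ∃ y, f y ≠ ⊤) (x : H) :
    -(f x₀).toReal ≤ 1/2*‖x - x₀‖^2 - (f (P x)).toReal - 1/2*‖x - P x‖^2 := by
  have hfx : f (P x) = (((f (P x)).toReal : ℝ) : EReal) :=
    isProxA_finite hprop hbot (isProx_iff_A.1 (hprox x))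
  have hfx₀ : f x₀ = (((f x₀).toReal : ℝ) : EReal) := (EReal.coe_toReal hx₀ (hbot x₀)).symm
  have h := (hprox x) x₀
  rw [hfx, hfx₀] at h
  have h' : (f (P x)).toReal + (1:ℝ)/2*‖x - P x‖^2 ≤ (f x₀).toReal + (1:ℝ)/2*‖x - x₀‖^2 := by
    exact_mod_cast h
  linarith

/-- two "convex functions" with a common difference have equal gradients -/
lemma grad_eq (Φ Ψ : H → ℝ) (u v : H → H)
    (hΦ : ∀ x z, Φ x + ⟪u x, z - x⟫_ℝ ≤ Φ z)
    (hΨ : ∀ x z, Ψ x + ⟪v x, z - x⟫_ℝ ≤ Ψ z)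
    (hv : ∀ x z, ‖v x - v z‖ ≤ ‖x - z‖)
    (hdiff : ∀ x z, Φ z - Φ x = Ψ z - Ψ x) :
    ∀ x, u x = v x := by
  intro x
  have key : ∀ w : H, ⟪u x - v x, w⟫_ℝ ≤ 0 := by
    intro w
    apply le_of_forall_pos_le_add
    intro ε hε
    set t : ℝ := ε/(‖w‖^2+1) with ht
    have ht0 : 0 < t := by positivity
    set z := x + t • w with hz
    have hzx : z - x = t • w := by rw [hz]; abel
    have h1 : ⟪u x, t • w⟫_ℝ ≤ Φ z - Φ x := by
      have := hΦ x z; rw [hzx] at this; linarith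
    have h2 : Ψ z - Ψ x ≤ ⟪v z, t • w⟫_ℝ := by
      have := hΨ z x
      have e : x - z = -(t • w) := by rw [hz]; abel
      rw [e, inner_neg_right] at this
      linarith
    have h3 : ⟪u x, t • w⟫_ℝ ≤ ⟪v z, t • w⟫_ℝ := by
      rw [hdiff x z] at h1; linarith
    rw [real_inner_smul_right, real_inner_smul_right] at h3
    have h4 : ⟪u x, w⟫_ℝ ≤ ⟪v z, w⟫_ℝ := le_of_mul_le_mul_left (by linarith [h3]) ht0
    have h5 : ⟪v z - v x, w⟫_ℝ ≤ t * ‖w‖^2 := by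
      calc ⟪v z - v x, w⟫_ℝ ≤ ‖v z - v x‖ * ‖w‖ := real_inner_le_norm _ _
        _ ≤ ‖z - x‖ * ‖w‖ := by
            apply mul_le_mul_of_nonneg_right (hv z x) (norm_nonneg _)
        _ = t * ‖w‖^2 := by
            rw [hzx, norm_smul, Real.norm_eq_abs, abs_of_pos ht0]; ring
    have h6 : t * ‖w‖^2 ≤ ε := by
      rw [ht]
      rw [div_mul_eq_mul_div, div_le_iff₀ (by positivity : (0:ℝ) < ‖w‖^2+1)]
      nlinarith [sq_nonneg ‖w‖]
    have h7 : ⟪v z, w⟫_ℝ = ⟪v x, w⟫_ℝ + ⟪v z - v x, w⟫_ℝ := by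
      rw [← inner_add_left]; congr 1; abel
    rw [inner_sub_left]
    linarith
  have h0 := key (u x - v x)
  rw [real_inner_self_eq_norm_sq] at h0
  have : ‖u x - v x‖ = 0 := by nlinarith [norm_nonneg (u x - v x), sq_nonneg ‖u x - v x‖]
  exact sub_eq_zero.1 (norm_eq_zero.1 this)

/-- Core analytic lemma: if `Φ, Ψ` are "smooth convex potentials" with gradients `u, v`
of equal norms, and `Ψ` is bounded below, then `Φ - Ψ` attains its sup nowhere above
any other value: `Φ w - Ψ w ≤ Φ x - Ψ x` for all `x, w`. -/
lemma descent_half (Φ Ψ : H → ℝ) (u v : H → H)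
    (hΦ : ∀ x z, Φ x + ⟪u x, z - x⟫_ℝ ≤ Φ z)
    (hΨ : ∀ x z, Ψ x + ⟪v x, z - x⟫_ℝ ≤ Ψ z)
    (hv : ∀ x z, ‖v x - v z‖ ≤ ‖x - z‖)
    (hn : ∀ x, ‖u x‖ = ‖v x‖)
    (mΨ : ℝ) (hm : ∀ x, mΨ ≤ Ψ x) :
    ∀ x w, Φ w - Ψ w ≤ Φ x - sInf (Set.range Ψ) := by
  intro x w
  apply le_of_forall_pos_le_add
  intro δ hδ
  set C : ℝ := Ψ w - mΨ with hCdef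
  have hC0 : 0 ≤ C := by have := hm w; simp only [hCdef]; linarith
  set γ : ℝ := min (1/2) (δ/(8*(C+1))) with hγdef
  have hγ0 : 0 < γ := lt_min (by norm_num) (by positivity)
  have hγh : γ ≤ 1/2 := min_le_left _ _
  have hγδ : 2*γ*C ≤ δ/4 := by
    have h1 : γ ≤ δ/(8*(C+1)) := min_le_right _ _
    have h2 : (0:ℝ) < 8*(C+1) := by linarith
    have h3 : γ*(8*(C+1)) ≤ δ := by
      have := (le_div_iff₀ h2).1 h1; linarith
    nlinarith
  set s : ℝ := δ/(8*(C+1)) with hsdef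
  have hs0 : 0 < s := by positivity
  set t : ℝ := γ*s with htdef
  have ht0 : 0 < t := mul_pos hγ0 hs0
  set ε : ℝ := δ*t/(16*(γ+1)) with hεdef
  have hε0 : 0 < ε := by positivity
  -- ε-minimizer z of Ψ
  have hbdd : BddBelow (Set.range Ψ) := ⟨mΨ, by rintro c ⟨a, rfl⟩; exact hm a⟩
  have hne : (Set.range Ψ).Nonempty := ⟨Ψ x, x, rfl⟩
  obtain ⟨cz, ⟨z, rfl⟩, hz⟩ := exists_lt_of_csInf_lt hne
    (lt_add_of_pos_right (sInf (Set.range Ψ)) hε0)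
  have hz' : ∀ a, Ψ z ≤ Ψ a + ε := fun a => by
    have h1 : sInf (Set.range Ψ) ≤ Ψ a := csInf_le hbdd ⟨a, rfl⟩
    linarith
  -- the iteration map (gradient descent on Ψ)
  set T : H → H := fun a => a - γ • v a with hTdef
  have hTa : ∀ a, a - T a = γ • v a := fun a => by simp only [hTdef]; abel
  have hTa' : ∀ a, T a - a = -(γ • v a) := fun a => by simp only [hTdef]; abel
  have hTnorm : ∀ a, ‖T a - a‖ = γ * ‖v a‖ := fun a => by
    rw [hTa' a, norm_neg, norm_smul, Real.norm_eq_abs, abs_of_pos hγ0]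
  -- step lemmas
  have s1 : ∀ a, Ψ (T a) + γ*(1-γ)*‖v a‖^2 ≤ Ψ a := by
    intro a
    have h := hΨ (T a) a
    rw [hTa a] at h
    have h1 : ⟪v (T a) - v a, v a⟫_ℝ ≥ -(γ*‖v a‖*‖v a‖) := by
      have h2 := abs_real_inner_le_norm (v (T a) - v a) (v a)
      have h3 : ‖v (T a) - v a‖ ≤ γ*‖v a‖ := by
        calc ‖v (T a) - v a‖ ≤ ‖T a - a‖ := hv _ _
          _ = γ*‖v a‖ := hTnorm a
      have h4 : ‖v (T a) - v a‖*‖v a‖ ≤ (γ*‖v a‖)*‖v a‖ :=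
        mul_le_mul_of_nonneg_right h3 (norm_nonneg _)
      have h5 := neg_abs_le ⟪v (T a) - v a, v a⟫_ℝ
      linarith
    have h6 : ⟪v (T a), γ • v a⟫_ℝ = γ * (⟪v a, v a⟫_ℝ + ⟪v (T a) - v a, v a⟫_ℝ) := by
      rw [real_inner_smul_right, inner_sub_left]; ring
    rw [h6, real_inner_self_eq_norm_sq] at h
    nlinarith [h, h1, sq_nonneg ‖v a‖]
  have s2 : ∀ a, Φ a - γ*‖v a‖^2 ≤ Φ (T a) := by
    intro a
    have h := hΦ a (T a)
    rw [hTa' a] at h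
    have h1 : ⟪u a, -(γ • v a)⟫_ℝ = -(γ * ⟪u a, v a⟫_ℝ) := by
      rw [inner_neg_right, real_inner_smul_right]
    rw [h1] at h
    have h2 : ⟪u a, v a⟫_ℝ ≤ ‖v a‖^2 := by
      calc ⟪u a, v a⟫_ℝ ≤ ‖u a‖*‖v a‖ := real_inner_le_norm _ _
        _ = ‖v a‖^2 := by rw [hn a]; ring
    nlinarith [h, h2]
  have s3 : ∀ a, ‖T a - z‖^2 ≤ ‖a - z‖^2 + 2*γ*ε + γ^2*‖v a‖^2 := by
    intro a
    have e1 : T a - z = (a - z) - γ • v a := by simp only [hTdef]; abel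
    rw [e1, norm_sub_sq_real]
    have e2 : ⟪a - z, γ • v a⟫_ℝ = γ * ⟪v a, a - z⟫_ℝ := by
      rw [real_inner_smul_right, real_inner_comm]
    have e3 : ‖γ • v a‖^2 = γ^2*‖v a‖^2 := by
      rw [norm_smul, Real.norm_eq_abs, mul_pow, sq_abs]
    have h4 : ⟪v a, z - a⟫_ℝ ≤ ε := by
      have := hΨ a z
      have := hz' a
      linarith
    have h5 : ⟪v a, a - z⟫_ℝ = -⟪v a, z - a⟫_ℝ := by
      rw [← inner_neg_right]; congr 1; abel
    rw [e2, e3]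
    nlinarith [h4, h5, hγ0]
  -- the trajectory starting at w
  set X : ℕ → H := fun n => T^[n] w with hXdef
  have hX0 : X 0 = w := rfl
  have hXs : ∀ n, X (n+1) = T (X n) := fun n => Function.iterate_succ_apply' T n w
  set ρ : ℕ → ℝ := fun n => ‖v (X n)‖ with hρdef
  set S : ℕ → ℝ := fun n => ∑ i ∈ Finset.range n, ρ i^2 with hSdef
  have hSs : ∀ n, S (n+1) = S n + ρ n^2 := fun n => Finset.sum_range_succ _ n
  have hS0 : S 0 = 0 := Finset.sum_range_zero _
  have hSnn : ∀ n, 0 ≤ S n := fun n => Finset.sum_nonneg (fun i _ => sq_nonneg _)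
  -- invariants
  have hA : ∀ n, Ψ (X n) + (γ/2) * S n ≤ Ψ w := by
    intro n
    induction n with
    | zero => rw [hX0, hS0]; simp
    | succ n ih =>
      have h1 := s1 (X n)
      rw [← hXs n] at h1
      have h2 : γ/2 ≤ γ*(1-γ) := by nlinarith
      have h3 : (γ/2)*ρ n^2 ≤ γ*(1-γ)*ρ n^2 :=
        mul_le_mul_of_nonneg_right h2 (sq_nonneg _)
      rw [hSs n]
      simp only [hρdef] at h3 ⊢
      nlinarith [h1, ih, h3]
  have hB : ∀ n, Φ w - Ψ w - γ^2 * S n ≤ Φ (X n) - Ψ (X n) := by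
    intro n
    induction n with
    | zero => rw [hX0, hS0]; simp
    | succ n ih =>
      have h1 := s1 (X n)
      have h2 := s2 (X n)
      rw [← hXs n] at h1 h2
      rw [hSs n]
      simp only [hρdef] at ih ⊢
      nlinarith [h1, h2, ih, sq_nonneg ‖v (X n)‖]
  have hCv : ∀ n, ‖X n - z‖^2 ≤ ‖w - z‖^2 + 2*γ*ε*n + γ^2 * S n := by
    intro n
    induction n with
    | zero => rw [hX0, hS0]; simp
    | succ n ih =>
      have h1 := s3 (X n)
      rw [← hXs n] at h1
      rw [hSs n]
      push_cast
      simp only [hρdef] at ih ⊢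
      nlinarith [h1, ih, hε0, hγ0]
  have hSb : ∀ n, γ * S n ≤ 2*C := by
    intro n
    have h1 := hA n
    have h2 := hm (X n)
    simp only [hCdef] at *
    linarith
  -- choice of N
  set R : ℝ := 2*‖x - z‖^2 + 2*‖w - z‖^2 + 4*γ*C with hRdef
  have hR0 : 0 ≤ R := by positivity
  obtain ⟨N, hN⟩ := exists_nat_gt (max 1 (4*R/(t*δ)))
  have hN1 : (1:ℝ) ≤ N := le_of_lt (lt_of_le_of_lt (le_max_left _ _) hN)
  have hNpos : (0:ℝ) < N := by linarith
  have hNR : R/(t*N) ≤ δ/4 := by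
    have h1 : 4*R/(t*δ) < N := lt_of_le_of_lt (le_max_right _ _) hN
    have h2 : (0:ℝ) < t*δ := mul_pos ht0 hδ
    have h3 : 4*R < N*(t*δ) := by
      have := (div_lt_iff₀ h2).1 h1; linarith
    rw [div_le_iff₀ (by positivity : (0:ℝ) < t*N)]
    nlinarith
  -- pigeonhole
  have hpig : ∃ i, i < N ∧ (N:ℝ) * ρ i^2 ≤ S N := by
    by_contra hcon
    push_neg at hcon
    have hNne : (Finset.range N).Nonempty := by
      rw [Finset.nonempty_range_iff]
      intro h0; rw [h0] at hNpos; exact absurd hNpos (by norm_num)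
    have h1 : ∑ i ∈ Finset.range N, S N / N < ∑ i ∈ Finset.range N, ρ i^2 := by
      apply Finset.sum_lt_sum_of_nonempty hNne
      intro i hi
      have := hcon i (Finset.mem_range.1 hi)
      rw [div_lt_iff₀ hNpos]
      linarith
    rw [Finset.sum_const, Finset.card_range, nsmul_eq_mul,
      mul_div_cancel₀ _ (ne_of_gt hNpos)] at h1
    exact absurd h1 (by simp only [hSdef]; exact lt_irrefl _)
  obtain ⟨i, hiN, hi⟩ := hpig
  -- bounds
  have hSN : S N ≤ 2*C/γ := by
    rw [le_div_iff₀ hγ0]; have := hSb N; linarith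
  have hγSi : γ^2 * S i ≤ 2*γ*C := by
    have h3 := hSb i
    have he : γ^2 * S i = γ*(γ * S i) := by ring
    rw [he]; nlinarith [hγ0]
  have hXiz : ‖X i - z‖^2 ≤ ‖w - z‖^2 + 2*γ*ε*N + 2*γ*C := by
    have h1 := hCv i
    have h4 : 2*γ*ε*(i:ℝ) ≤ 2*γ*ε*N := by
      have hc : (i:ℝ) ≤ N := by exact_mod_cast le_of_lt hiN
      have : (0:ℝ) ≤ 2*γ*ε := by positivity
      exact mul_le_mul_of_nonneg_left hc this
    linarith
  -- final chain
  have f1 : Φ w - Ψ w ≤ Φ (X i) - Ψ (X i) + 2*γ*C := by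
    have h1 := hB i
    linarith
  have f2 : Φ (X i) ≤ Φ x + ρ i * ‖x - X i‖ := by
    have h1 := hΦ (X i) x
    have h2 : ⟪u (X i), x - X i⟫_ℝ ≥ -(ρ i * ‖x - X i‖) := by
      have h3 := abs_real_inner_le_norm (u (X i)) (x - X i)
      have h4 := neg_abs_le ⟪u (X i), x - X i⟫_ℝ
      have h5 : ‖u (X i)‖ = ρ i := hn (X i)
      rw [h5] at h3
      linarith
    linarith
  have f3 : sInf (Set.range Ψ) ≤ Ψ (X i) := csInf_le hbdd ⟨X i, rfl⟩
  -- AM-GM and numeric bounds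
  have htN : (0:ℝ) < t*N := by positivity
  have hb2 : ‖x - X i‖^2 ≤ R + 4*γ*ε*N := by
    have tri : ‖x - X i‖ ≤ ‖x - z‖ + ‖X i - z‖ := by
      have e : x - X i = (x - z) - (X i - z) := by abel
      rw [e]; exact norm_sub_le _ _
    simp only [hRdef]
    nlinarith [hXiz, norm_nonneg (x - z), norm_nonneg (X i - z), norm_nonneg (x - X i),
      sq_nonneg (‖x - z‖ - ‖X i - z‖)]
  have am : 2*(ρ i * ‖x - X i‖) ≤ t*N*ρ i^2 + ‖x - X i‖^2/(t*N) := by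
    have h1 : (2*(ρ i * ‖x - X i‖) - t*N*ρ i^2) ≤ ‖x - X i‖^2/(t*N) := by
      rw [le_div_iff₀ htN]
      nlinarith [sq_nonneg (t*N*ρ i - ‖x - X i‖)]
    linarith
  have d1 : t*N*ρ i^2 ≤ δ/4 := by
    have h1 : t*((N:ℝ)*ρ i^2) ≤ t*(2*C/γ) :=
      mul_le_mul_of_nonneg_left (le_trans hi hSN) ht0.le
    have h2 : t*(2*C/γ) = 2*C*s := by
      rw [htdef]; field_simp
    have h3 : 2*C*s ≤ δ/4 := by
      have h4 : s*(8*(C+1)) = δ := by rw [hsdef]; field_simp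
      nlinarith [hs0, hC0]
    calc t*N*ρ i^2 = t*((N:ℝ)*ρ i^2) := by ring
      _ ≤ 2*C*s := by rw [← h2]; exact h1
      _ ≤ δ/4 := h3
  have d3 : ‖x - X i‖^2/(t*N) ≤ R/(t*N) + 4*γ*ε/t := by
    have h1 : ‖x - X i‖^2/(t*N) ≤ (R + 4*γ*ε*N)/(t*N) := by gcongr
    have h2 : (R + 4*γ*ε*N)/(t*N) = R/(t*N) + 4*γ*ε/t := by
      field_simp
    linarith [h1, h2.le, h2.ge]
  have d5 : 4*γ*ε/t ≤ δ/4 := by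
    have h1 : 4*γ*ε/t = γ*δ/(4*(γ+1)) := by
      rw [hεdef]; field_simp; ring
    rw [h1, div_le_div_iff₀ (by positivity) (by norm_num)]
    nlinarith [hγ0, hδ]
  have hρb : 0 ≤ ρ i * ‖x - X i‖ := mul_nonneg (norm_nonneg _) (norm_nonneg _)
  have final : Φ w - Ψ w ≤ Φ x - sInf (Set.range Ψ) + 2*γ*C + 2*(ρ i * ‖x - X i‖) := by
    linarith [f1, f2, f3]
  clear_value R S ρ X T ε t s γ C
  linarith [final, am, d1, d3, d5, hNR, hγδ]

lemma descent_const (Φ Ψ : H → ℝ) (u v : H → H)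
    (hΦ : ∀ x z, Φ x + ⟪u x, z - x⟫_ℝ ≤ Φ z)
    (hΨ : ∀ x z, Ψ x + ⟪v x, z - x⟫_ℝ ≤ Ψ z)
    (hu : ∀ x z, ‖u x - u z‖ ≤ ‖x - z‖)
    (hv : ∀ x z, ‖v x - v z‖ ≤ ‖x - z‖)
    (hn : ∀ x, ‖u x‖ = ‖v x‖)
    (mΦ : ℝ) (hmΦ : ∀ x, mΦ ≤ Φ x)
    (mΨ : ℝ) (hmΨ : ∀ x, mΨ ≤ Ψ x) :
    ∀ x w, Φ w - Ψ w ≤ Φ x - Ψ x := by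
  intro x w
  have hbddΦ : BddBelow (Set.range Φ) := ⟨mΦ, by rintro c ⟨a, rfl⟩; exact hmΦ a⟩
  have hbddΨ : BddBelow (Set.range Ψ) := ⟨mΨ, by rintro c ⟨a, rfl⟩; exact hmΨ a⟩
  have hneΦ : (Set.range Φ).Nonempty := ⟨Φ x, x, rfl⟩
  have h1 := descent_half Φ Ψ u v hΦ hΨ hv hn mΨ hmΨ
  have h2 := descent_half Ψ Φ v u hΨ hΦ hu (fun a => (hn a).symm) mΦ hmΦ
  have h3 : Φ w - Ψ w ≤ sInf (Set.range Φ) - sInf (Set.range Ψ) := by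
    have h4 : ∀ c ∈ Set.range Φ, sInf (Set.range Ψ) + (Φ w - Ψ w) ≤ c := by
      rintro c ⟨a, rfl⟩
      have := h1 a w
      linarith
    have h5 := le_csInf hneΦ h4
    linarith
  have hneΨ : (Set.range Ψ).Nonempty := ⟨Ψ x, x, rfl⟩
  have h6 : Ψ x - Φ x ≤ sInf (Set.range Ψ) - sInf (Set.range Φ) := by
    have h4 : ∀ c ∈ Set.range Ψ, sInf (Set.range Φ) + (Ψ x - Φ x) ≤ c := by
      rintro c ⟨a, rfl⟩
      have := h2 a x
      linarith
    have h5 := le_csInf hneΨ h4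
    linarith
  linarith

/-- Recovery: if `g = f - κ` on the range of the prox of `f`, then `g y ≤ f y - κ`
everywhere on the domain of `f`. -/
lemma recovery_le {f g : H → EReal}
    (hfprop : ∃ y, f y ≠ ⊤) (hfbot : ∀ y, f y ≠ ⊥)
    (hfconv : ERealConvexOn f) (hflsc : LowerSemicontinuous f)
    (hglsc : LowerSemicontinuous g)
    {B : ℝ} {xb : H} (hB : ∀ w, ((B - ‖xb - w‖^2 : ℝ) : EReal) ≤ f w)
    {P : H → H} (hprox : ∀ x, IsProx f x (P x))
    {κ : ℝ} (hκ : ∀ z, g (P z) = (((f (P z)).toReal - κ : ℝ) : EReal))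
    {y : H} (hy : f y ≠ ⊤) :
    g y ≤ (((f y).toReal - κ : ℝ) : EReal) := by
  set ry : ℝ := (f y).toReal with hry
  have hyco : f y = (ry : EReal) := (EReal.coe_toReal hy (hfbot y)).symm
  -- the approximating prox points
  have hex : ∀ n : ℕ, ∃ q, IsProxA ((n:ℝ)+4) f y q := fun n =>
    prox_exists hfprop hfbot hfconv hflsc hB y (by norm_num : (4:ℝ) ≤ (n:ℝ)+4)
  choose q hq using hex
  set r : ℕ → ℝ := fun n => (f (q n)).toReal with hrdef
  have co : ∀ n, f (q n) = ((r n : ℝ) : EReal) := fun n =>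
    isProxA_finite hfprop hfbot (hq n)
  -- each q n is in the range of P
  have hrange : ∀ n, ∃ z, P z = q n := by
    intro n
    have hα : (0:ℝ) < (n:ℝ)+4 := by positivity
    have hvi := prox_vi hfconv hα (hq n) (co n)
    set s : H := ((n:ℝ)+4) • (y - q n) with hsdef
    have hsub : ∀ w, ((r n + ⟪s, w - q n⟫_ℝ : ℝ) : EReal) ≤ f w := by
      intro w
      have := hvi w
      rw [hsdef, real_inner_smul_left] at *
      exact this
    have hP : IsProx f (q n + s) (q n) := isProx_of_subgrad (co n) s hsub
    refine ⟨q n + s, ?_⟩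
    exact prox_unique hfprop hfbot hfconv one_pos
      (isProx_iff_A.1 (hprox (q n + s))) (isProx_iff_A.1 hP)
  have hgq : ∀ n, g (q n) = ((r n - κ : ℝ) : EReal) := by
    intro n
    obtain ⟨z, hz⟩ := hrange n
    have := hκ z
    rw [hz] at this
    rw [this]
  -- convergence estimates
  have hup : ∀ n, r n + ((n:ℝ)+4)/2 * ‖y - q n‖^2 ≤ ry := by
    intro n
    have h := isProxA_real (hq n) (co n) hyco
    simp only [sub_self, norm_zero] at h
    nlinarith [h]
  have hrlow : ∀ n, B - ‖xb - q n‖^2 ≤ r n := by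
    intro n
    have := hB (q n)
    rw [co n] at this
    exact_mod_cast this
  set K : ℝ := ry - B + 2*‖xb - y‖^2 with hKdef
  have hdist : ∀ n : ℕ, (n:ℝ) * ‖y - q n‖^2 ≤ 2*K := by
    intro n
    have h1 := hup n
    have h2 := hrlow n
    have tri : ‖xb - q n‖ ≤ ‖xb - y‖ + ‖y - q n‖ := by
      have e : xb - q n = (xb - y) + (y - q n) := by abel
      rw [e]; exact norm_add_le _ _
    have h3 : ‖xb - q n‖^2 ≤ 2*‖xb - y‖^2 + 2*‖y - q n‖^2 := by
      nlinarith [norm_nonneg (xb - q n), norm_nonneg (xb - y), norm_nonneg (y - q n),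
        sq_nonneg (‖xb - y‖ - ‖y - q n‖)]
    simp only [hKdef]
    nlinarith [sq_nonneg ‖y - q n‖]
  have hrup : ∀ n, r n ≤ ry := by
    intro n
    have h1 := hup n
    nlinarith [sq_nonneg ‖y - q n‖, Nat.cast_nonneg (α := ℝ) n]
  have htend : Filter.Tendsto q Filter.atTop (nhds y) := by
    rw [Metric.tendsto_atTop]
    intro ε hε
    obtain ⟨N, hN⟩ := exists_nat_gt (max 1 (2*K/ε^2))
    refine ⟨N, fun n hn => ?_⟩
    have hn1 : (1:ℝ) ≤ n := by
      have : (1:ℝ) < N := lt_of_le_of_lt (le_max_left _ _) hN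
      have : (N:ℝ) ≤ n := by exact_mod_cast hn
      linarith
    have h1 := hdist n
    have h2 : 2*K/ε^2 < (N:ℝ) := lt_of_le_of_lt (le_max_right _ _) hN
    have h3 : 2*K < (n:ℝ)*ε^2 := by
      have h4 : 2*K < (N:ℝ)*ε^2 := by
        have := (div_lt_iff₀ (by positivity : (0:ℝ) < ε^2)).1 h2
        linarith
      have h5 : (N:ℝ)*ε^2 ≤ (n:ℝ)*ε^2 := by
        have : (N:ℝ) ≤ n := by exact_mod_cast hn
        nlinarith [sq_nonneg ε]
      linarith
    rw [dist_eq_norm]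
    have e : ‖q n - y‖ = ‖y - q n‖ := norm_sub_rev _ _
    rw [e]
    by_contra hge
    push_neg at hge
    have h6 : ε^2 ≤ ‖y - q n‖^2 := by nlinarith [hε.le]
    have h7 : (n:ℝ)*ε^2 ≤ (n:ℝ)*‖y - q n‖^2 :=
      mul_le_mul_of_nonneg_left h6 (by positivity)
    linarith
  -- conclude by lower semicontinuity of g
  by_contra hcon
  push_neg at hcon
  obtain ⟨c, hc1, hc2⟩ := EReal.exists_between_coe_real hcon
  have hev : ∀ᶠ n in Filter.atTop, (c : EReal) < g (q n) :=
    htend.eventually (hglsc y c hc2)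
  obtain ⟨n, hn⟩ := hev.exists
  rw [hgq n, EReal.coe_lt_coe_iff] at hn
  rw [EReal.coe_lt_coe_iff] at hc1
  have := hrup n
  linarith

/-- The Fenchel (Legendre-Fenchel) conjugate of `f`. -/
def fenchel (f : H → EReal) (p : H) : EReal :=
  ⨆ v : H, ((⟪p, v⟫_ℝ : ℝ) : EReal) - f v

/-- If the norms `‖prox_f · - x₀‖` and `‖prox_g · - x₀‖` coincide everywhere, then
`f - f x₀ = g - g x₀`. -/
theorem eq_of_prox_norm_eq
    (f g : H → EReal) (hf : Gamma0 f) (hg : Gamma0 g)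
    (x₀ : H) (hx₀f : f x₀ ≠ ⊤) (hx₀g : g x₀ ≠ ⊤)
    (proxf proxg : H → H)
    (hproxf : ∀ x, IsProx f x (proxf x)) (hproxg : ∀ x, IsProx g x (proxg x))
    (h : ∀ x, ‖proxf x - x₀‖ = ‖proxg x - x₀‖) :
    ∀ x, f x - f x₀ = g x - g x₀ := by
  obtain ⟨hfprop, hfbot, hfconv, hflsc⟩ := hf
  obtain ⟨hgprop, hgbot, hgconv, hglsc⟩ := hg
  set Φ : H → ℝ := fun x => 1/2*‖x - x₀‖^2 - (f (proxf x)).toReal - 1/2*‖x - proxf x‖^2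
    with hΦdef
  set Ψ : H → ℝ := fun x => 1/2*‖x - x₀‖^2 - (g (proxg x)).toReal - 1/2*‖x - proxg x‖^2
    with hΨdef
  set u : H → H := fun x => proxf x - x₀ with hudef
  set v : H → H := fun x => proxg x - x₀ with hvdef
  have hΦ : ∀ x z, Φ x + ⟪u x, z - x⟫_ℝ ≤ Φ z := fun x z =>
    phi_subgrad hfprop hfbot hproxf x₀ x z
  have hΨ : ∀ x z, Ψ x + ⟪v x, z - x⟫_ℝ ≤ Ψ z := fun x z =>
    phi_subgrad hgprop hgbot hproxg x₀ x z
  have hu : ∀ x z, ‖u x - u z‖ ≤ ‖x - z‖ := by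
    intro x z
    have e : u x - u z = proxf x - proxf z := by simp only [hudef]; abel
    rw [e]
    exact prox_nonexpansive hfprop hfbot hfconv
      (isProx_iff_A.1 (hproxf x)) (isProx_iff_A.1 (hproxf z))
  have hv : ∀ x z, ‖v x - v z‖ ≤ ‖x - z‖ := by
    intro x z
    have e : v x - v z = proxg x - proxg z := by simp only [hvdef]; abel
    rw [e]
    exact prox_nonexpansive hgprop hgbot hgconv
      (isProx_iff_A.1 (hproxg x)) (isProx_iff_A.1 (hproxg z))
  have hn : ∀ x, ‖u x‖ = ‖v x‖ := fun x => h x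
  have hmΦ : ∀ x, -(f x₀).toReal ≤ Φ x := fun x =>
    phi_bdd hfbot hproxf x₀ hx₀f hfprop x
  have hmΨ : ∀ x, -(g x₀).toReal ≤ Ψ x := fun x =>
    phi_bdd hgbot hproxg x₀ hx₀g hgprop x
  have hconst := descent_const Φ Ψ u v hΦ hΨ hu hv hn _ hmΦ _ hmΨ
  have hdiff : ∀ x z, Φ z - Φ x = Ψ z - Ψ x := by
    intro x z
    have h1 := hconst x z
    have h2 := hconst z x
    linarith
  have huv : ∀ x, u x = v x := grad_eq Φ Ψ u v hΦ hΨ hv hdiff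
  have hPQ : ∀ x, proxf x = proxg x := by
    intro x
    have h1 := huv x
    simp only [hudef, hvdef] at h1
    exact sub_left_inj.1 h1
  set κ : ℝ := (f (proxf x₀)).toReal - (g (proxg x₀)).toReal with hκdef
  have key : ∀ w, Ψ w - Φ w = (f (proxf w)).toReal - (g (proxg w)).toReal := by
    intro w
    simp only [hΦdef, hΨdef]
    rw [← hPQ w]
    ring
  have hκP : ∀ z, (f (proxf z)).toReal - (g (proxg z)).toReal = κ := by
    intro z
    have h1 := hdiff x₀ z
    have h2 := key z
    have h3 := key x₀
    simp only [hκdef]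
    linarith
  -- quadratic lower bounds
  have hBf : ∀ w, (((f (proxf x₀)).toReal + 1/2*‖x₀ - proxf x₀‖^2 - ‖x₀ - w‖^2 : ℝ) : EReal)
      ≤ f w := by
    intro w
    by_cases hw : f w = ⊤
    · rw [hw]; exact le_top
    · have hwc : f w = (((f w).toReal : ℝ) : EReal) := (EReal.coe_toReal hw (hfbot w)).symm
      have h1 := isProxA_real (isProx_iff_A.1 (hproxf x₀))
        (isProxA_finite hfprop hfbot (isProx_iff_A.1 (hproxf x₀))) hwc
      rw [hwc, EReal.coe_le_coe_iff]
      nlinarith [sq_nonneg ‖x₀ - w‖]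
  have hBg : ∀ w, (((g (proxg x₀)).toReal + 1/2*‖x₀ - proxg x₀‖^2 - ‖x₀ - w‖^2 : ℝ) : EReal)
      ≤ g w := by
    intro w
    by_cases hw : g w = ⊤
    · rw [hw]; exact le_top
    · have hwc : g w = (((g w).toReal : ℝ) : EReal) := (EReal.coe_toReal hw (hgbot w)).symm
      have h1 := isProxA_real (isProx_iff_A.1 (hproxg x₀))
        (isProxA_finite hgprop hgbot (isProx_iff_A.1 (hproxg x₀))) hwc
      rw [hwc, EReal.coe_le_coe_iff]
      nlinarith [sq_nonneg ‖x₀ - w‖]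
  -- transfer of values on the range of the prox
  have hκfg : ∀ z, g (proxf z) = (((f (proxf z)).toReal - κ : ℝ) : EReal) := by
    intro z
    have h2 := hPQ z
    have h3 : g (proxg z) = (((g (proxg z)).toReal : ℝ) : EReal) :=
      isProxA_finite hgprop hgbot (isProx_iff_A.1 (hproxg z))
    rw [h2, h3]
    have h4 : (g (proxg z)).toReal = (f (proxf z)).toReal - κ := by
      have := hκP z; linarith
    rw [h4, h2]
  have hκgf : ∀ z, f (proxg z) = (((g (proxg z)).toReal - (-κ) : ℝ) : EReal) := by
    intro z
    have h2 := hPQ z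
    have h3 : f (proxf z) = (((f (proxf z)).toReal : ℝ) : EReal) :=
      isProxA_finite hfprop hfbot (isProx_iff_A.1 (hproxf z))
    rw [← h2, h3]
    have h4 : (f (proxf z)).toReal = (g (proxg z)).toReal - (-κ) := by
      have := hκP z; linarith
    rw [h4, h2]
  have hfg : ∀ y, f y ≠ ⊤ → g y ≤ (((f y).toReal - κ : ℝ) : EReal) := fun y hy =>
    recovery_le hfprop hfbot hfconv hflsc hglsc hBf hproxf hκfg hy
  have hgf : ∀ y, g y ≠ ⊤ → f y ≤ (((g y).toReal - (-κ) : ℝ) : EReal) := fun y hy =>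
    recovery_le hgprop hgbot hgconv hglsc hflsc hBg hproxg hκgf hy
  -- pointwise identity
  have claim : ∀ y, f y = g y + ((κ : ℝ) : EReal) := by
    intro y
    by_cases hy : f y = ⊤
    · have hgy : g y = ⊤ := by
        by_contra hgy
        have h1 := hgf y hgy
        rw [hy] at h1
        exact absurd (top_le_iff.1 h1) (EReal.coe_ne_top _)
      rw [hy, hgy, EReal.top_add_coe]
    · have h1 := hfg y hy
      have hgyne : g y ≠ ⊤ := fun ht => by
        rw [ht] at h1
        exact absurd (top_le_iff.1 h1) (EReal.coe_ne_top _)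
      have h2 := hgf y hgyne
      have hfyc : f y = (((f y).toReal : ℝ) : EReal) := (EReal.coe_toReal hy (hfbot y)).symm
      have hgyc : g y = (((g y).toReal : ℝ) : EReal) :=
        (EReal.coe_toReal hgyne (hgbot y)).symm
      rw [hgyc] at h1
      rw [hfyc] at h2
      rw [EReal.coe_le_coe_iff] at h1 h2
      rw [hfyc, hgyc, ← EReal.coe_add]
      have : (f y).toReal = (g y).toReal + κ := by linarith
      rw [this]
  -- conclusion
  intro x
  have hgx₀c : g x₀ = (((g x₀).toReal : ℝ) : EReal) := (EReal.coe_toReal hx₀g (hgbot x₀)).symm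
  have hfx₀c : f x₀ = (((g x₀).toReal + κ : ℝ) : EReal) := by
    rw [claim x₀, EReal.coe_add, ← hgx₀c]
  by_cases hgx : g x = ⊤
  · have hfx : f x = ⊤ := by rw [claim x, hgx, EReal.top_add_coe]
    rw [hfx, hgx, hfx₀c, hgx₀c, EReal.top_sub_coe, EReal.top_sub_coe]
  · have hgxc : g x = (((g x).toReal : ℝ) : EReal) := (EReal.coe_toReal hgx (hgbot x)).symm
    have hfxc : f x = (((g x).toReal + κ : ℝ) : EReal) := by
      rw [claim x, EReal.coe_add, ← hgxc]
    rw [hfxc, hgxc, hfx₀c, hgx₀c, ← EReal.coe_sub, ← EReal.coe_sub]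
    norm_num
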